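/- For all nonempty metric spaces X and Y with D(X,Y) < ∞, one has d̂(X,Y) ≤ e^{2·D(X,Y)} − e^{D(X,Y)}. -/
import Mathlib

open ENNReal

/-- `f` is an `(A,B)`-quasi-isometric embedding. -/
def QIEmb {X Y : Type*} [MetricSpace X] [MetricSpace Y] (A B : ℝ) (f : X → Y) : Prop :=
  ∀ x x' : X, (1 / A) * dist x x' - B ≤ dist (f x) (f x') ∧
    dist (f x) (f x') ≤ A * dist x x' + B

/-- `X` and `Y` are `(A,B,C)`-quasi-isometric. -/
def QuasiIsometric (X Y : Type*) [MetricSpace X] [MetricSpace Y] (A B C : ℝ) : Prop :=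
  ∃ (f : X → Y) (g : Y → X), QIEmb A B f ∧ QIEmb A B g ∧
    (∀ x : X, dist (g (f x)) x ≤ C) ∧ (∀ y : Y, dist (f (g y)) y ≤ C)

/-- The quasi-isometric distance `d̂`. -/
noncomputable def qiDist (X Y : Type*) [MetricSpace X] [MetricSpace Y] : ℝ≥0∞ :=
  sInf {e : ℝ≥0∞ | ∃ r : ℝ, 0 < r ∧ e = ENNReal.ofReal r ∧ QuasiIsometric X Y (1 + r) r r}

/-- A correspondence between X and Y: both projections are surjective. -/
def IsCorrespondence {X Y : Type*} (R : Set (X × Y)) : Prop :=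
  (∀ x : X, ∃ y : Y, (x, y) ∈ R) ∧ (∀ y : Y, ∃ x : X, (x, y) ∈ R)

/-- The quasi-isometric distortion of a correspondence, in [0,∞]. -/
noncomputable def qDis {X Y : Type*} [MetricSpace X] [MetricSpace Y]
    (R : Set (X × Y)) : ℝ≥0∞ :=
  sInf {e : ℝ≥0∞ | ∃ r : ℝ, 0 < r ∧ e = ENNReal.ofReal r ∧
    ∀ p ∈ R, ∀ q ∈ R,
      Real.exp (-r) * dist p.2 q.2 - Real.exp r + 1 ≤ dist p.1 q.1 ∧
      dist p.1 q.1 ≤ Real.exp r * dist p.2 q.2 + Real.exp (2 * r) - Real.exp r}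

/-- The distance D, infimum of quasi-isometric distortions of correspondences. -/
noncomputable def Ddist (X Y : Type*) [MetricSpace X] [MetricSpace Y] : ℝ≥0∞ :=
  ⨅ R : {R : Set (X × Y) // IsCorrespondence R}, qDis R.1

/-- Key algebraic facts: convert the distortion bounds into clean bounds with ρ = e^{2r}-e^r. -/
lemma key_bounds (r dX dY : ℝ) (hr : 0 < r) (hX : 0 ≤ dX) (hY : 0 ≤ dY)
    (hlow : Real.exp (-r) * dY - Real.exp r + 1 ≤ dX)
    (hhigh : dX ≤ Real.exp r * dY + Real.exp (2 * r) - Real.exp r) :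
    ((1 / (1 + (Real.exp (2*r) - Real.exp r))) * dX - (Real.exp (2*r) - Real.exp r) ≤ dY ∧
      dY ≤ (1 + (Real.exp (2*r) - Real.exp r)) * dX + (Real.exp (2*r) - Real.exp r)) ∧
    ((1 / (1 + (Real.exp (2*r) - Real.exp r))) * dY - (Real.exp (2*r) - Real.exp r) ≤ dX ∧
      dX ≤ (1 + (Real.exp (2*r) - Real.exp r)) * dY + (Real.exp (2*r) - Real.exp r)) := by
  have hE1 : 1 < Real.exp r := Real.one_lt_exp_iff.2 hr
  have hE0 : 0 < Real.exp r := Real.exp_pos r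
  set E := Real.exp r with hE
  have h2r : Real.exp (2*r) = E * E := by rw [two_mul, Real.exp_add]
  have hneg : Real.exp (-r) = E⁻¹ := Real.exp_neg r
  rw [h2r] at hhigh ⊢
  rw [hneg] at hlow
  have hinv : E * E⁻¹ = 1 := mul_inv_cancel₀ hE0.ne'
  -- from hlow : E⁻¹ * dY - E + 1 ≤ dX, multiply by E > 0
  have K1 : dY ≤ E * dX + E * E - E := by
    have h := mul_le_mul_of_nonneg_left hlow hE0.le
    nlinarith [h, hinv, hY]
  -- from hhigh, K2: dX ≤ E*dY + E*E - E (direct)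
  have hpos : (0:ℝ) < 1 + (E * E - E) := by nlinarith
  constructor
  · constructor
    · rw [div_mul_eq_mul_div, sub_le_iff_le_add, div_le_iff₀ hpos]
      nlinarith [hhigh, sq_nonneg (E - 1), mul_nonneg hY (sq_nonneg (E - 1))]
    · nlinarith [K1, sq_nonneg (E - 1), mul_nonneg hX (sq_nonneg (E - 1))]
  · constructor
    · rw [div_mul_eq_mul_div, sub_le_iff_le_add, div_le_iff₀ hpos]
      nlinarith [K1, sq_nonneg (E - 1), mul_nonneg hX (sq_nonneg (E - 1))]
    · nlinarith [hhigh, sq_nonneg (E - 1), mul_nonneg hY (sq_nonneg (E - 1))]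

lemma rho_mono {r s : ℝ} (hr : 0 ≤ r) (hrs : r ≤ s) :
    Real.exp (2*r) - Real.exp r ≤ Real.exp (2*s) - Real.exp s := by
  have h1 : Real.exp r ≤ Real.exp s := Real.exp_le_exp.2 hrs
  have h2 : 1 ≤ Real.exp r := Real.one_le_exp hr
  have e2r : Real.exp (2*r) = Real.exp r * Real.exp r := by rw [two_mul, Real.exp_add]
  have e2s : Real.exp (2*s) = Real.exp s * Real.exp s := by rw [two_mul, Real.exp_add]
  rw [e2r, e2s]
  nlinarith

/-- From a correspondence with distortion parameter r, get quasi-isometry with ρ = e^{2r}-e^r. -/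
lemma qi_of_corr {X Y : Type*} [MetricSpace X] [MetricSpace Y] [Nonempty X] [Nonempty Y]
    {R : Set (X × Y)} (hR : IsCorrespondence R) {r : ℝ} (hr : 0 < r)
    (hprop : ∀ p ∈ R, ∀ q ∈ R,
      Real.exp (-r) * dist p.2 q.2 - Real.exp r + 1 ≤ dist p.1 q.1 ∧
      dist p.1 q.1 ≤ Real.exp r * dist p.2 q.2 + Real.exp (2 * r) - Real.exp r) :
    QuasiIsometric X Y (1 + (Real.exp (2*r) - Real.exp r)) (Real.exp (2*r) - Real.exp r)
      (Real.exp (2*r) - Real.exp r) := by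
  choose F hF using hR.1
  choose G hG using hR.2
  set ρ := Real.exp (2*r) - Real.exp r with hρ
  refine ⟨F, G, ?_, ?_, ?_, ?_⟩
  · intro x x'
    obtain ⟨h1, h2⟩ := hprop (x, F x) (hF x) (x', F x') (hF x')
    exact (key_bounds r (dist x x') (dist (F x) (F x')) hr dist_nonneg dist_nonneg h1 h2).1
  · intro y y'
    obtain ⟨h1, h2⟩ := hprop (G y, y) (hG y) (G y', y') (hG y')
    exact (key_bounds r (dist (G y) (G y')) (dist y y') hr dist_nonneg dist_nonneg h1 h2).2
  · intro x
    obtain ⟨_, h2⟩ := hprop (x, F x) (hF x) (G (F x), F x) (hG (F x))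
    simp only [dist_self] at h2
    rw [dist_comm]
    calc dist x (G (F x)) ≤ Real.exp r * 0 + Real.exp (2*r) - Real.exp r := h2
      _ = ρ := by ring
  · intro y
    obtain ⟨h1, _⟩ := hprop (G y, y) (hG y) (G y, F (G y)) (hF (G y))
    simp only [dist_self] at h1
    have hE1 : 1 < Real.exp r := Real.one_lt_exp_iff.2 hr
    have hE0 : 0 < Real.exp r := Real.exp_pos r
    have hneg : Real.exp (-r) = (Real.exp r)⁻¹ := Real.exp_neg r
    have e2r : Real.exp (2*r) = Real.exp r * Real.exp r := by rw [two_mul, Real.exp_add]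
    rw [hneg] at h1
    have hinv : Real.exp r * (Real.exp r)⁻¹ = 1 := mul_inv_cancel₀ hE0.ne'
    have h := mul_le_mul_of_nonneg_left h1 hE0.le
    have hd : 0 ≤ dist y (F (G y)) := dist_nonneg
    rw [dist_comm]
    rw [hρ, e2r]
    nlinarith [h, hinv, hd]

/-- d̂(X,Y) ≤ e^{2·D(X,Y)} − e^{D(X,Y)} whenever D(X,Y) is finite. -/
theorem qiDist_le_exp_Ddist
    (X Y : Type*) [MetricSpace X] [MetricSpace Y] [Nonempty X] [Nonempty Y]
    (hfin : Ddist X Y < ⊤) :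
    qiDist X Y ≤
      ENNReal.ofReal (Real.exp (2 * (Ddist X Y).toReal) - Real.exp ((Ddist X Y).toReal)) := by
  set d := (Ddist X Y).toReal with hd
  have hd0 : 0 ≤ d := ENNReal.toReal_nonneg
  have hDeq : Ddist X Y = ENNReal.ofReal d := (ENNReal.ofReal_toReal hfin.ne).symm
  refine ENNReal.le_of_forall_pos_le_add fun ε hε _ => ?_
  have hεR : (0:ℝ) < (ε:ℝ) := hε
  have hc : ContinuousAt (fun s : ℝ => Real.exp (2*s) - Real.exp s) d := by fun_prop
  have hev : ∀ᶠ s in nhds d, Real.exp (2*s) - Real.exp s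
      < Real.exp (2*d) - Real.exp d + (ε:ℝ) := by
    exact hc.eventually (gt_mem_nhds (by dsimp only; linarith))
  obtain ⟨δ, hδ, hball⟩ := Metric.eventually_nhds_iff.1 hev
  set s := d + δ/2 with hs
  have hds : d < s := by simp [hs]; linarith
  have hs0 : 0 < s := lt_of_le_of_lt hd0 hds
  have hsball : Real.exp (2*s) - Real.exp s < Real.exp (2*d) - Real.exp d + (ε:ℝ) := by
    apply hball
    rw [Real.dist_eq, hs]
    rw [abs_of_pos (by linarith)]
    linarith
  have hDs : Ddist X Y < ENNReal.ofReal s := by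
    rw [hDeq, ENNReal.ofReal_lt_ofReal_iff hs0]
    exact hds
  rw [Ddist, iInf_lt_iff] at hDs
  obtain ⟨⟨R, hR⟩, hRlt⟩ := hDs
  rw [qDis, sInf_lt_iff] at hRlt
  obtain ⟨e, ⟨r, hr, rfl, hprop⟩, hlt⟩ := hRlt
  have hrs : r < s := (ENNReal.ofReal_lt_ofReal_iff hs0).1 hlt
  have hQI := qi_of_corr hR hr hprop
  have hρ0 : 0 < Real.exp (2*r) - Real.exp r := by
    have h1 : Real.exp r < Real.exp (2*r) := Real.exp_lt_exp.2 (by linarith)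
    linarith
  have h1 : qiDist X Y ≤ ENNReal.ofReal (Real.exp (2*r) - Real.exp r) :=
    sInf_le ⟨Real.exp (2*r) - Real.exp r, hρ0, rfl, hQI⟩
  have h2 : Real.exp (2*r) - Real.exp r ≤ Real.exp (2*d) - Real.exp d + (ε:ℝ) :=
    le_trans (rho_mono hr.le hrs.le) hsball.le
  calc qiDist X Y ≤ ENNReal.ofReal (Real.exp (2*r) - Real.exp r) := h1
    _ ≤ ENNReal.ofReal (Real.exp (2*d) - Real.exp d + (ε:ℝ)) := ENNReal.ofReal_le_ofReal h2
    _ ≤ ENNReal.ofReal (Real.exp (2*d) - Real.exp d) + ENNReal.ofReal (ε:ℝ) :=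
        ENNReal.ofReal_add_le
    _ = ENNReal.ofReal (Real.exp (2*d) - Real.exp d) + ε := by
        rw [ENNReal.ofReal_coe_nnreal]
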